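/- arXiv:2109.06646 — 4 statements merged into one kernel-verified Lean document; each statement's English description precedes it below -/
import Mathlib

section
/- Let ν be a nonnegative Borel measure on (0,∞) with no atoms and define the tail integral U_ν(x) = ν((x,∞)). Then the pushforward of ν under U_ν equals the Lebesgue measure restricted to the interval (0, U_ν(0)) (where U_ν(0) = ν((0,∞)) may be +∞). -/
open MeasureTheory Set
open scoped ENNReal

lemma gRight (ν : Measure ℝ) (c : ℝ) :
    ν (Set.Ioi c) = ⨆ n : ℕ, ν (Set.Ioi (c + ((n : ℝ) + 1)⁻¹)) := by
  have hmono : Monotone (fun n : ℕ => Set.Ioi (c + ((n : ℝ) + 1)⁻¹)) := by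
    intro n m hnm
    apply Set.Ioi_subset_Ioi
    have h1 : (0:ℝ) < (n:ℝ) + 1 := by positivity
    gcongr
  have hU : (⋃ n : ℕ, Set.Ioi (c + ((n : ℝ) + 1)⁻¹)) = Set.Ioi c := by
    ext x
    simp only [Set.mem_iUnion, Set.mem_Ioi]
    constructor
    · rintro ⟨n, hn⟩
      have : (0:ℝ) < ((n:ℝ)+1)⁻¹ := by positivity
      linarith
    · intro hx
      obtain ⟨n, hn⟩ := exists_nat_gt (x - c)⁻¹
      refine ⟨n, ?_⟩
      have hxc : (0:ℝ) < x - c := by linarith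
      have h1 : (x - c)⁻¹ < (n:ℝ) + 1 := by linarith
      have h2 : ((n:ℝ)+1)⁻¹ < x - c := (inv_lt_comm₀ hxc (by positivity)).mp h1
      linarith
  rw [← hU, hmono.measure_iUnion]

lemma gLeft (ν : Measure ℝ) (c : ℝ) (hc : 0 < c) (hfin : ∀ ε > (0:ℝ), ν (Set.Ioi ε) ≠ ⊤) :
    ν (Set.Ici c) = ⨅ n : ℕ, ν (Set.Ioi (c - c / ((n : ℝ) + 2))) := by
  have hanti : Antitone (fun n : ℕ => Set.Ioi (c - c / ((n : ℝ) + 2))) := by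
    intro n m hnm
    apply Set.Ioi_subset_Ioi
    have h1 : (0:ℝ) < (n:ℝ) + 2 := by positivity
    gcongr
  have hI : (⋂ n : ℕ, Set.Ioi (c - c / ((n : ℝ) + 2))) = Set.Ici c := by
    ext x
    simp only [Set.mem_iInter, Set.mem_Ioi, Set.mem_Ici]
    constructor
    · intro h
      by_contra hx
      push_neg at hx
      obtain ⟨n, hn⟩ := exists_nat_gt (c / (c - x))
      have hcx : (0:ℝ) < c - x := by linarith
      have h2 : c / ((n:ℝ) + 2) < c - x := by
        rw [div_lt_iff₀ (by positivity)]
        have : c / (c - x) < (n:ℝ) + 2 := by linarith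
        calc c = (c / (c - x)) * (c - x) := by field_simp
        _ < ((n:ℝ)+2) * (c - x) := by gcongr
        _ = (c - x) * ((n:ℝ)+2) := by ring
      have := h n
      linarith
    · intro hx n
      have : (0:ℝ) < c / ((n:ℝ)+2) := by positivity
      linarith
  rw [← hI, hanti.measure_iInter]
  · exact fun n => measurableSet_Ioi.nullMeasurableSet
  · refine ⟨0, ?_⟩
    have h02 : c - c / (((0:ℕ):ℝ) + 2) = c / 2 := by push_cast; ring
    rw [h02]
    exact hfin _ (by positivity)

lemma gZero (ν : Measure ℝ) (hfin : ∀ ε > (0:ℝ), ν (Set.Ioi ε) ≠ ⊤) :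
    (⨅ n : ℕ, ν (Set.Ioi ((n : ℝ) + 1))) = 0 := by
  have hanti : Antitone (fun n : ℕ => Set.Ioi ((n : ℝ) + 1)) := by
    intro n m hnm
    apply Set.Ioi_subset_Ioi
    have : (n:ℝ) ≤ m := by exact_mod_cast hnm
    linarith
  have hI : (⋂ n : ℕ, Set.Ioi ((n : ℝ) + 1)) = (∅ : Set ℝ) := by
    ext x
    simp only [Set.mem_iInter, Set.mem_Ioi, Set.mem_empty_iff_false, iff_false]
    intro h
    obtain ⟨n, hn⟩ := exists_nat_gt x
    have := h n
    linarith
  rw [← hanti.measure_iInter (fun n => measurableSet_Ioi.nullMeasurableSet)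
      ⟨0, by simpa using hfin 1 one_pos⟩, hI]
  simp

lemma key (ν : Measure ℝ) [NullSingletonClass ν] (hfin : ∀ ε > (0:ℝ), ν (Set.Ioi ε) ≠ ⊤) (B : ℝ≥0∞) :
    ν {x : ℝ | 0 < x ∧ ν (Set.Ioi x) ≤ B} = min B (ν (Set.Ioi (0:ℝ))) := by
  have hg : Antitone (fun x : ℝ => ν (Set.Ioi x)) :=
    fun x y hxy => measure_mono (Set.Ioi_subset_Ioi hxy)
  rcases le_or_gt (ν (Set.Ioi (0:ℝ))) B with hUB | hBU
  · have hE : {x : ℝ | 0 < x ∧ ν (Set.Ioi x) ≤ B} = Set.Ioi 0 := by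
      ext x
      simp only [Set.mem_setOf_eq, Set.mem_Ioi]
      exact ⟨fun h => h.1, fun h => ⟨h, le_trans (hg h.le) hUB⟩⟩
    rw [hE, min_eq_right hUB]
  · rw [min_eq_left hBU.le]
    by_cases hne : ∃ x : ℝ, 0 < x ∧ ν (Set.Ioi x) ≤ B
    · set E := {x : ℝ | 0 < x ∧ ν (Set.Ioi x) ≤ B} with hEdef
      have hEne : E.Nonempty := hne
      have hbdd : BddBelow E := ⟨0, fun y hy => hy.1.le⟩
      set c := sInf E with hcdef
      have hsub1 : Set.Ioi c ⊆ E := by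
        intro x hx
        obtain ⟨z, hz, hzx⟩ := exists_lt_of_csInf_lt hEne hx
        exact ⟨hz.1.trans hzx, le_trans (hg hzx.le) hz.2⟩
      have hsub2 : E ⊆ Set.Ici c := fun y hy => csInf_le hbdd hy
      have hIci : ν (Set.Ici c) = ν (Set.Ioi c) := (measure_congr (Ioi_ae_eq_Ici (a := c))).symm
      have hνE : ν E = ν (Set.Ioi c) := by
        refine le_antisymm ?_ (measure_mono hsub1)
        exact le_trans (measure_mono hsub2) hIci.le
      have hcB : ν (Set.Ioi c) ≤ B := by
        rw [gRight ν c]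
        refine iSup_le fun n => ?_
        have hmem : c + ((n:ℝ)+1)⁻¹ ∈ E := hsub1 (by
          simp only [Set.mem_Ioi]
          have : (0:ℝ) < ((n:ℝ)+1)⁻¹ := by positivity
          linarith)
        exact hmem.2
      have hcpos : 0 < c := by
        by_contra h
        push_neg at h
        have hsub : Set.Ioi (0:ℝ) ⊆ E := fun x hx => hsub1 (lt_of_le_of_lt h hx)
        have hle : ν (Set.Ioi (0:ℝ)) ≤ B := by
          rw [gRight ν 0]
          refine iSup_le fun n => ?_
          exact (hsub (by simp only [Set.mem_Ioi]; positivity)).2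
        exact absurd hle (not_le.mpr hBU)
      have hBc : B ≤ ν (Set.Ioi c) := by
        rw [← hIci, gLeft ν c hcpos hfin]
        refine le_iInf fun n => ?_
        have hlt : c / ((n:ℝ)+2) < c := div_lt_self hcpos (by
          have : (0:ℝ) ≤ (n:ℝ) := n.cast_nonneg
          linarith)
        have hypos : 0 < c - c / ((n:ℝ)+2) := by
          have : 0 < c / ((n:ℝ)+2) := by positivity
          linarith
      -- y ∉ E since y < c
        have hyc : c - c / ((n:ℝ)+2) < c := by
          have : 0 < c / ((n:ℝ)+2) := by positivity
          linarith
        have hy : c - c / ((n:ℝ)+2) ∉ E := fun hy => absurd (csInf_le hbdd hy) (not_le.mpr hyc)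
        by_contra hcon
        push_neg at hcon
        exact hy ⟨hypos, hcon.le⟩
      rw [hνE]
      exact le_antisymm hcB hBc
    · push_neg at hne
      have hE : {x : ℝ | 0 < x ∧ ν (Set.Ioi x) ≤ B} = ∅ := by
        ext x
        simp only [Set.mem_setOf_eq, Set.mem_empty_iff_false, iff_false, not_and, not_le]
        exact hne x
      have hB0 : B = 0 := by
        have h5 : B ≤ ⨅ n : ℕ, ν (Set.Ioi ((n:ℝ)+1)) :=
          le_iInf fun n => (hne _ (by positivity)).le
        rw [gZero ν hfin] at h5
        exact le_antisymm h5 (zero_le (a := B))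
      rw [hE, hB0]
      simp

lemma lhs_calc (ν : Measure ℝ) [NullSingletonClass ν] (hsupp : ν (Set.Iic 0) = 0)
    (hfin : ∀ ε > (0:ℝ), ν (Set.Ioi ε) ≠ ⊤) {a b : ℝ} (hab : a ≤ b) :
    ν ((fun x : ℝ => (ν (Set.Ioi x)).toReal) ⁻¹' Set.Ioc a b)
      = min (ENNReal.ofReal b) (ν (Set.Ioi (0:ℝ))) - min (ENNReal.ofReal a) (ν (Set.Ioi (0:ℝ))) := by
  have hcompl : ν (Set.Ioi (0:ℝ))ᶜ = 0 := by rwa [Set.compl_Ioi]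
  rw [← measure_inter_conull hcompl]
  rcases lt_or_ge b 0 with hb | hb
  · have h1 : (fun x : ℝ => (ν (Set.Ioi x)).toReal) ⁻¹' Set.Ioc a b ∩ Set.Ioi 0 = ∅ := by
      ext x
      simp only [Set.mem_inter_iff, Set.mem_preimage, Set.mem_Ioc, Set.mem_Ioi,
        Set.mem_empty_iff_false, iff_false]
      rintro ⟨⟨_, h2⟩, _⟩
      exact absurd (ENNReal.toReal_nonneg.trans h2) (not_le.mpr hb)
    rw [h1, measure_empty, ENNReal.ofReal_eq_zero.mpr hb.le]
    simp [zero_tsub]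
  · rcases lt_or_ge a 0 with ha | ha
    · have h1 : (fun x : ℝ => (ν (Set.Ioi x)).toReal) ⁻¹' Set.Ioc a b ∩ Set.Ioi 0
          = {x : ℝ | 0 < x ∧ ν (Set.Ioi x) ≤ ENNReal.ofReal b} := by
        ext x
        simp only [Set.mem_inter_iff, Set.mem_preimage, Set.mem_Ioc, Set.mem_Ioi, Set.mem_setOf_eq]
        constructor
        · rintro ⟨⟨_, h2⟩, hx⟩
          refine ⟨hx, ?_⟩
          rw [← ENNReal.ofReal_toReal (hfin x hx)]
          exact ENNReal.ofReal_le_ofReal h2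
        · rintro ⟨hx, h2⟩
          refine ⟨⟨lt_of_lt_of_le ha ENNReal.toReal_nonneg, ?_⟩, hx⟩
          calc (ν (Set.Ioi x)).toReal ≤ (ENNReal.ofReal b).toReal :=
                ENNReal.toReal_mono ENNReal.ofReal_ne_top h2
            _ = b := ENNReal.toReal_ofReal hb
      rw [h1, key ν hfin, ENNReal.ofReal_eq_zero.mpr ha.le]
      simp
    · have hOa : ν {x : ℝ | 0 < x ∧ ν (Set.Ioi x) ≤ ENNReal.ofReal a} ≠ ⊤ := by
        rw [key ν hfin]
        exact (lt_of_le_of_lt (min_le_left _ _) ENNReal.ofReal_lt_top).ne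
      have hg : Antitone (fun x : ℝ => ν (Set.Ioi x)) :=
        fun x y hxy => measure_mono (Set.Ioi_subset_Ioi hxy)
      have hmeas : MeasurableSet {x : ℝ | 0 < x ∧ ν (Set.Ioi x) ≤ ENNReal.ofReal a} := by
        have heq : {x : ℝ | 0 < x ∧ ν (Set.Ioi x) ≤ ENNReal.ofReal a}
            = Set.Ioi 0 ∩ (fun x : ℝ => ν (Set.Ioi x)) ⁻¹' Set.Iic (ENNReal.ofReal a) := rfl
        rw [heq]
        exact measurableSet_Ioi.inter (hg.measurable measurableSet_Iic)
      have hsubE : {x : ℝ | 0 < x ∧ ν (Set.Ioi x) ≤ ENNReal.ofReal a}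
          ⊆ {x : ℝ | 0 < x ∧ ν (Set.Ioi x) ≤ ENNReal.ofReal b} :=
        fun x hx => ⟨hx.1, hx.2.trans (ENNReal.ofReal_le_ofReal hab)⟩
      have h1 : (fun x : ℝ => (ν (Set.Ioi x)).toReal) ⁻¹' Set.Ioc a b ∩ Set.Ioi 0
          = {x : ℝ | 0 < x ∧ ν (Set.Ioi x) ≤ ENNReal.ofReal b}
            \ {x : ℝ | 0 < x ∧ ν (Set.Ioi x) ≤ ENNReal.ofReal a} := by
        ext x
        simp only [Set.mem_inter_iff, Set.mem_preimage, Set.mem_Ioc, Set.mem_Ioi,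
          Set.mem_diff, Set.mem_setOf_eq, not_and, not_le]
        constructor
        · rintro ⟨⟨h2, h3⟩, hx⟩
          have hne := hfin x hx
          refine ⟨⟨hx, ?_⟩, fun _ => ?_⟩
          · rw [← ENNReal.ofReal_toReal hne]
            exact ENNReal.ofReal_le_ofReal h3
          · rw [← ENNReal.ofReal_toReal hne]
            exact (ENNReal.ofReal_lt_ofReal_iff_of_nonneg ha).mpr h2
        · rintro ⟨⟨hx, h3⟩, h4⟩
          have hne := hfin x hx
          have h4' := h4 hx
          refine ⟨⟨?_, ?_⟩, hx⟩
          · rw [← ENNReal.ofReal_toReal hne] at h4'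
            exact (ENNReal.ofReal_lt_ofReal_iff_of_nonneg ha).mp h4'
          · have h5 := ENNReal.toReal_mono ENNReal.ofReal_ne_top h3
            rwa [ENNReal.toReal_ofReal hb] at h5
      rw [h1, measure_diff hsubE hmeas.nullMeasurableSet hOa, key ν hfin, key ν hfin]

lemma aux (a b : ℝ) :
    ENNReal.ofReal (b - max a 0) = ENNReal.ofReal b - ENNReal.ofReal a := by
  rcases le_or_gt a 0 with ha | ha
  · rw [max_eq_right ha, sub_zero, ENNReal.ofReal_eq_zero.mpr ha, tsub_zero]
  · rw [max_eq_left ha.le, ENNReal.ofReal_sub b ha.le]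

lemma rhs_calc (U0 : ℝ≥0∞) {a b : ℝ} (hab : a ≤ b) :
    volume (Set.Ioc a b ∩ {t : ℝ | 0 < t ∧ ENNReal.ofReal t < U0})
      = min (ENNReal.ofReal b) U0 - min (ENNReal.ofReal a) U0 := by
  by_cases hU : U0 = ⊤
  · subst hU
    have hS : {t : ℝ | 0 < t ∧ ENNReal.ofReal t < ⊤} = Set.Ioi 0 := by
      ext t; simp [ENNReal.ofReal_lt_top]
    rw [hS, Set.Ioc_inter_Ioi, Real.volume_Ioc, min_eq_left le_top, min_eq_left le_top, aux]
  · have hU0r : U0 = ENNReal.ofReal U0.toReal := (ENNReal.ofReal_toReal hU).symm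
    set r := U0.toReal with hrdef
    have hr0 : 0 ≤ r := ENNReal.toReal_nonneg
    have hS : {t : ℝ | 0 < t ∧ ENNReal.ofReal t < U0} = Set.Ioo 0 r := by
      ext t
      simp only [Set.mem_setOf_eq, Set.mem_Ioo]
      exact ⟨fun ⟨ht, h2⟩ => ⟨ht, (ENNReal.ofReal_lt_iff_lt_toReal ht.le hU).mp h2⟩,
        fun ⟨ht, h2⟩ => ⟨ht, (ENNReal.ofReal_lt_iff_lt_toReal ht.le hU).mpr h2⟩⟩
    rw [hS]
    rcases lt_or_ge b r with hbr | hrb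
    · have h1 : Set.Ioc a b ∩ Set.Ioo 0 r = Set.Ioc (max a 0) b := by
        ext t
        simp only [Set.mem_inter_iff, Set.mem_Ioc, Set.mem_Ioo, max_lt_iff]
        constructor
        · rintro ⟨⟨h1, h2⟩, h3, _⟩
          exact ⟨⟨h1, h3⟩, h2⟩
        · rintro ⟨⟨h1, h3⟩, h2⟩
          exact ⟨⟨h1, h2⟩, h3, lt_of_le_of_lt h2 hbr⟩
      rw [h1, Real.volume_Ioc, aux,
        min_eq_left (show ENNReal.ofReal b ≤ U0 by
          rw [hU0r]; exact ENNReal.ofReal_le_ofReal hbr.le),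
        min_eq_left (show ENNReal.ofReal a ≤ U0 by
          rw [hU0r]; exact ENNReal.ofReal_le_ofReal (by linarith))]
    · have h1 : Set.Ioc a b ∩ Set.Ioo 0 r = Set.Ioo (max a 0) r := by
        ext t
        simp only [Set.mem_inter_iff, Set.mem_Ioc, Set.mem_Ioo, max_lt_iff]
        constructor
        · rintro ⟨⟨h1, _⟩, h3, h4⟩
          exact ⟨⟨h1, h3⟩, h4⟩
        · rintro ⟨⟨h1, h3⟩, h4⟩
          exact ⟨⟨h1, le_trans h4.le hrb⟩, h3, h4⟩
      rw [h1, Real.volume_Ioo,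
        min_eq_right (show U0 ≤ ENNReal.ofReal b by
          rw [hU0r]; exact ENNReal.ofReal_le_ofReal hrb)]
      rcases le_or_gt a r with har | hra
      · rw [min_eq_left (show ENNReal.ofReal a ≤ U0 by
            rw [hU0r]; exact ENNReal.ofReal_le_ofReal har), hU0r]
        exact aux a r
      · rw [min_eq_right (show U0 ≤ ENNReal.ofReal a by
            rw [hU0r]; exact ENNReal.ofReal_le_ofReal hra.le), tsub_self,
          ENNReal.ofReal_eq_zero, max_eq_left (hr0.trans hra.le)]
        linarith

theorem stmt_3 (ν : Measure ℝ) [NullSingletonClass ν]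
    (hsupp : ν (Set.Iic 0) = 0) (hfin : ∀ ε > (0 : ℝ), ν (Set.Ioi ε) ≠ ⊤) :
    Measure.map (fun x : ℝ => (ν (Set.Ioi x)).toReal) ν
      = volume.restrict {t : ℝ | 0 < t ∧ ENNReal.ofReal t < ν (Set.Ioi (0 : ℝ))} := by
  have hg : Antitone (fun x : ℝ => ν (Set.Ioi x)) :=
    fun x y hxy => measure_mono (Set.Ioi_subset_Ioi hxy)
  have hf : Measurable (fun x : ℝ => (ν (Set.Ioi x)).toReal) := hg.measurable.ennreal_toReal
  refine Measure.ext_of_Ioc' _ _ (fun a b hab => ?_) (fun a b hab => ?_)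
  · rw [Measure.map_apply hf measurableSet_Ioc, lhs_calc ν hsupp hfin hab.le]
    exact (lt_of_le_of_lt (le_trans tsub_le_self (min_le_left _ _)) ENNReal.ofReal_lt_top).ne
  · rw [Measure.map_apply hf measurableSet_Ioc, lhs_calc ν hsupp hfin hab.le,
      Measure.restrict_apply measurableSet_Ioc, rhs_calc _ hab.le]
end

section
/- For any non-increasing right-continuous function U : [0,∞) → [0,∞] with generalized inverse U^{-1}(t) = inf{x ≥ 0 : U(x) ≤ t}, and for all a, b ≥ 0, the Lebesgue measure of { t ≥ 0 : U₁^{-1}(t) > a and U₂^{-1}(t) > b } equals min(U₁(a), U₂(b)), for any two such functions U₁, U₂. -/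
open MeasureTheory ENNReal

/-- Generalized (pseudo-)inverse of a tail-integral-like function `U : ℝ → ℝ≥0∞`,
`U⁻¹(t) = inf {x ≥ 0 : U x ≤ t}` (with value `∞` when the set is empty). -/
noncomputable def tailInv (U : ℝ → ℝ≥0∞) (t : ℝ≥0∞) : ℝ≥0∞ :=
  ⨅ x ∈ {x : ℝ | 0 ≤ x ∧ U x ≤ t}, ENNReal.ofReal x

lemma tailInv_key (U : ℝ → ℝ≥0∞) (hanti : AntitoneOn U (Set.Ici 0))
    (hrc : ∀ x ∈ Set.Ici (0 : ℝ), ContinuousWithinAt U (Set.Ici x) x)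
    (a : ℝ) (ha : 0 ≤ a) (t : ℝ≥0∞) :
    ENNReal.ofReal a < tailInv U t ↔ t < U a := by
  constructor
  · intro h
    by_contra h'
    push_neg at h'
    have hmem : a ∈ {x : ℝ | 0 ≤ x ∧ U x ≤ t} := ⟨ha, h'⟩
    have := biInf_le (f := fun x => ENNReal.ofReal x) hmem
    exact absurd (this.trans_lt h) (lt_irrefl _)
  · intro h
    have hcw := hrc a ha
    have hev : ∀ᶠ x in nhdsWithin a (Set.Ici a), U x ∈ Set.Ioi t :=
      hcw (IsOpen.mem_nhds isOpen_Ioi h)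
    rw [Filter.eventually_iff, mem_nhdsGE_iff_exists_Ico_subset] at hev
    obtain ⟨u, hu, hsub⟩ := hev
    have hu' : a < u := hu
    have hle : ENNReal.ofReal u ≤ tailInv U t := by
      refine le_iInf₂ fun x hx => ?_
      obtain ⟨hx0, hxt⟩ := hx
      have hux : u ≤ x := by
        by_contra hlt
        push_neg at hlt
        rcases le_or_gt a x with hax | hxa
        · exact absurd hxt (not_le.mpr (hsub ⟨hax, hlt⟩))
        · have := hanti hx0 ha hxa.le
          exact absurd hxt (not_le.mpr (lt_of_lt_of_le h this))
      exact ENNReal.ofReal_le_ofReal hux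
    exact lt_of_lt_of_le ((ENNReal.ofReal_lt_ofReal_iff (ha.trans_lt hu')).mpr hu') hle

theorem stmt_6 (U₁ U₂ : ℝ → ℝ≥0∞)
    (h₁anti : AntitoneOn U₁ (Set.Ici 0)) (h₂anti : AntitoneOn U₂ (Set.Ici 0))
    (h₁rc : ∀ x ∈ Set.Ici (0 : ℝ), ContinuousWithinAt U₁ (Set.Ici x) x)
    (h₂rc : ∀ x ∈ Set.Ici (0 : ℝ), ContinuousWithinAt U₂ (Set.Ici x) x)
    (a b : ℝ) (ha : 0 ≤ a) (hb : 0 ≤ b) :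
    volume {t : ℝ | 0 ≤ t ∧ ENNReal.ofReal a < tailInv U₁ (ENNReal.ofReal t)
        ∧ ENNReal.ofReal b < tailInv U₂ (ENNReal.ofReal t)}
      = min (U₁ a) (U₂ b) := by
  have hset : {t : ℝ | 0 ≤ t ∧ ENNReal.ofReal a < tailInv U₁ (ENNReal.ofReal t)
        ∧ ENNReal.ofReal b < tailInv U₂ (ENNReal.ofReal t)}
      = {t : ℝ | 0 ≤ t ∧ ENNReal.ofReal t < min (U₁ a) (U₂ b)} := by
    ext t
    simp only [Set.mem_setOf_eq, lt_min_iff,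
      tailInv_key U₁ h₁anti h₁rc a ha, tailInv_key U₂ h₂anti h₂rc b hb]
  rw [hset]
  set m := min (U₁ a) (U₂ b) with hm
  by_cases hmt : m = ⊤
  · have : {t : ℝ | 0 ≤ t ∧ ENNReal.ofReal t < m} = Set.Ici 0 := by
      ext t
      simp [hmt, ENNReal.ofReal_lt_top]
    rw [this, Real.volume_Ici, hmt]
  · have : {t : ℝ | 0 ≤ t ∧ ENNReal.ofReal t < m} = Set.Ico 0 m.toReal := by
      ext t
      simp only [Set.mem_setOf_eq, Set.mem_Ico]
      constructor
      · rintro ⟨ht, hlt⟩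
        exact ⟨ht, (ENNReal.ofReal_lt_iff_lt_toReal ht hmt).mp hlt⟩
      · rintro ⟨ht, hlt⟩
        exact ⟨ht, (ENNReal.ofReal_lt_iff_lt_toReal ht hmt).mpr hlt⟩
    rw [this, Real.volume_Ico, sub_zero, ENNReal.ofReal_toReal hmt]
end

section
/- Let ν¹, ν² be measures on Ω₁ = (0,∞) with finite second moments, and suppose ν¹ is atomless and ν¹((0,∞)) ≥ ν²((0,∞)). Let T(x) = U_{ν²}^{-1}(U_{ν¹}(x)) where U_ν is the tail integral and U_ν^{-1} its pseudo-inverse. Then the pushforward T_# ν¹ (restricted to (0,∞)) equals ν², i.e., for every b > 0, ν¹({x : T(x) > b}) = U_{ν²}(b). -/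
open MeasureTheory ENNReal

/-- Right continuity of tails: if all strictly-later tails are `≤ t`, so is the tail at `a`. -/
lemma tail_right_cont (ν : Measure ℝ) (a : ℝ) (t : ℝ≥0∞)
    (h : ∀ x, a < x → ν (Set.Ioi x) ≤ t) : ν (Set.Ioi a) ≤ t := by
  have hU : Set.Ioi a = ⋃ n : ℕ, Set.Ioi (a + 1 / (n + 1) : ℝ) := by
    ext x
    simp only [Set.mem_Ioi, Set.mem_iUnion]
    constructor
    · intro hx
      obtain ⟨n, hn⟩ := exists_nat_one_div_lt (sub_pos.mpr hx)
      exact ⟨n, by push_cast at hn ⊢; linarith⟩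
    · rintro ⟨n, hn⟩
      have : (0 : ℝ) < 1 / (n + 1) := by positivity
      linarith
  have hmono : Monotone fun n : ℕ => Set.Ioi (a + 1 / (n + 1) : ℝ) := by
    intro n m hnm
    apply Set.Ioi_subset_Ioi
    have h1 : (0:ℝ) < (n:ℝ) + 1 := by positivity
    have h2 : (n:ℝ) + 1 ≤ (m:ℝ) + 1 := by exact_mod_cast by omega
    have := one_div_le_one_div_of_le h1 h2
    linarith
  rw [hU, hmono.measure_iUnion]
  refine iSup_le fun n => h _ ?_
  have : (0:ℝ) < 1 / (n + 1) := by positivity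
  linarith

/-- Finiteness of tails from the second moment. -/
lemma tail_ne_top (ν : Measure ℝ) (hmom : ∫⁻ x, ENNReal.ofReal (x ^ 2) ∂ν ≠ ⊤)
    {x : ℝ} (hx : 0 < x) : ν (Set.Ioi x) ≠ ⊤ := by
  have key : ENNReal.ofReal (x ^ 2) * ν (Set.Ioi x) ≤ ∫⁻ y, ENNReal.ofReal (y ^ 2) ∂ν := by
    calc ENNReal.ofReal (x ^ 2) * ν (Set.Ioi x)
        = ∫⁻ _ in Set.Ioi x, ENNReal.ofReal (x ^ 2) ∂ν := (setLIntegral_const _ _).symm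
      _ ≤ ∫⁻ y in Set.Ioi x, ENNReal.ofReal (y ^ 2) ∂ν := by
          refine setLIntegral_mono (by measurability) fun y hy => ?_
          have : x < y := hy
          exact ENNReal.ofReal_le_ofReal (by nlinarith)
      _ ≤ ∫⁻ y, ENNReal.ofReal (y ^ 2) ∂ν := setLIntegral_le_lintegral _ _
  intro htop
  rw [htop, ENNReal.mul_top (by simp [ENNReal.ofReal_eq_zero]; nlinarith)] at key
  exact hmom (top_le_iff.mp key)

/-- Tails tend to zero. -/
lemma tail_iInf (ν : Measure ℝ) (hmom : ∫⁻ x, ENNReal.ofReal (x ^ 2) ∂ν ≠ ⊤) :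
    ⨅ n : ℕ, ν (Set.Ioi (n + 1 : ℝ)) = 0 := by
  have hanti : Antitone fun n : ℕ => Set.Ioi ((n : ℝ) + 1) := by
    intro n m hnm
    apply Set.Ioi_subset_Ioi
    have : (n:ℝ) ≤ m := by exact_mod_cast hnm
    linarith
  have := hanti.measure_iInter (μ := ν)
    (fun n => (measurableSet_Ioi).nullMeasurableSet)
    ⟨0, tail_ne_top ν hmom (by norm_num)⟩
  rw [← this]
  convert measure_empty (μ := ν)
  ext x
  simp only [Set.mem_iInter, Set.mem_Ioi, Set.mem_empty_iff_false, iff_false, not_forall]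
  obtain ⟨n, hn⟩ := exists_nat_gt x
  exact ⟨n, not_lt.mpr (by linarith)⟩

theorem stmt_13 (ν₁ ν₂ : Measure ℝ) [NullSingletonClass ν₁]
    (h₁supp : ν₁ (Set.Iic 0) = 0) (h₂supp : ν₂ (Set.Iic 0) = 0)
    (h₁mom : ∫⁻ x, ENNReal.ofReal (x ^ 2) ∂ν₁ ≠ ⊤)
    (h₂mom : ∫⁻ x, ENNReal.ofReal (x ^ 2) ∂ν₂ ≠ ⊤)
    (hmass : ν₂ (Set.Ioi 0) ≤ ν₁ (Set.Ioi 0))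
    -- `T = U_{ν²}^{-1} ∘ U_{ν¹}`
    (T : ℝ → ℝ)
    (hT : ∀ x, T x = sInf {y : ℝ | 0 ≤ y ∧ ν₂ (Set.Ioi y) ≤ ν₁ (Set.Ioi x)}) :
    ∀ b > (0 : ℝ), ν₁ {x : ℝ | b < T x} = ν₂ (Set.Ioi b) := by
  intro b hb
  set t := ν₂ (Set.Ioi b) with ht
  set L := {x : ℝ | b < T x} with hL
  set R := {x : ℝ | ν₁ (Set.Ioi x) < t} with hR
  set Z := {x : ℝ | ν₁ (Set.Ioi x) = 0} with hZ
  -- tail antitonicity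
  have hanti : ∀ {x y : ℝ}, x ≤ y → ν₁ (Set.Ioi y) ≤ ν₁ (Set.Ioi x) :=
    fun hxy => measure_mono (Set.Ioi_subset_Ioi hxy)
  have hanti₂ : ∀ {x y : ℝ}, x ≤ y → ν₂ (Set.Ioi y) ≤ ν₂ (Set.Ioi x) :=
    fun hxy => measure_mono (Set.Ioi_subset_Ioi hxy)
  -- Step 1 : L ⊆ R
  have hLR : L ⊆ R := by
    intro x hx
    by_contra hcon
    have h1 : t ≤ ν₁ (Set.Ioi x) := not_lt.mp hcon
    have hbd : b ∈ {y : ℝ | 0 ≤ y ∧ ν₂ (Set.Ioi y) ≤ ν₁ (Set.Ioi x)} := ⟨le_of_lt hb, h1⟩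
    have : T x ≤ b := by
      rw [hT x]
      exact csInf_le ⟨0, fun y hy => hy.1⟩ hbd
    exact absurd hx (by simp only [hL, Set.mem_setOf_eq]; linarith)
  -- Step 2 : R \ L ⊆ Z
  have hRLZ : R \ L ⊆ Z := by
    rintro x ⟨hxR, hxL⟩
    have hTx : T x ≤ b := not_lt.mp hxL
    set S := {y : ℝ | 0 ≤ y ∧ ν₂ (Set.Ioi y) ≤ ν₁ (Set.Ioi x)} with hS
    by_cases hne : S.Nonempty
    · -- impossible : this would force t ≤ ν₁ (Ioi x)
      exfalso
      have hkey : ∀ y, b < y → ν₂ (Set.Ioi y) ≤ ν₁ (Set.Ioi x) := by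
        intro y hy
        have hinf : sInf S < y := lt_of_le_of_lt (hT x ▸ hTx) hy
        obtain ⟨z, hzS, hzy⟩ := exists_lt_of_csInf_lt hne hinf
        exact le_trans (hanti₂ hzy.le) hzS.2
      have := tail_right_cont ν₂ b (ν₁ (Set.Ioi x)) hkey
      exact absurd hxR (by simp only [hR, Set.mem_setOf_eq]; exact not_lt.mpr this)
    · -- S empty : ν₁ (Ioi x) is below all tails of ν₂, hence 0
      have hall : ∀ y : ℝ, 0 ≤ y → ν₁ (Set.Ioi x) < ν₂ (Set.Ioi y) := by
        intro y hy
        by_contra hcon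
        exact hne ⟨y, hy, not_lt.mp hcon⟩
      have hle : ν₁ (Set.Ioi x) ≤ ⨅ n : ℕ, ν₂ (Set.Ioi (n + 1 : ℝ)) :=
        le_iInf fun n => (hall _ (by positivity)).le
      rw [tail_iInf ν₂ h₂mom] at hle
      exact le_antisymm hle zero_le
  -- Step 3 : ν₁ Z = 0
  have hZ0 : ν₁ Z = 0 := by
    by_cases hne : (Z ∩ Set.Ioi 0).Nonempty
    · set a := sInf (Z ∩ Set.Ioi 0) with ha
      have hbdd : BddBelow (Z ∩ Set.Ioi 0) := ⟨0, fun z hz => hz.2.le⟩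
      have htail : ν₁ (Set.Ioi a) = 0 := by
        refine le_antisymm (tail_right_cont ν₁ a 0 fun x hx => ?_) zero_le
        obtain ⟨z, hzZ, hzx⟩ := exists_lt_of_csInf_lt hne hx
        exact le_trans (hanti hzx.le) hzZ.1.le
      have hIci : ν₁ (Set.Ici a) = 0 := by
        rw [← measure_congr (Ioi_ae_eq_Ici (μ := ν₁) (a := a))]; exact htail
      have hsub : Z ⊆ Set.Iic 0 ∪ Set.Ici a := by
        intro z hz
        by_cases hz0 : z ≤ 0
        · exact Or.inl hz0
        · exact Or.inr (csInf_le hbdd ⟨hz, not_le.mp hz0⟩)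
      refine le_antisymm ?_ zero_le
      calc ν₁ Z ≤ ν₁ (Set.Iic 0 ∪ Set.Ici a) := measure_mono hsub
        _ ≤ ν₁ (Set.Iic 0) + ν₁ (Set.Ici a) := measure_union_le _ _
        _ = 0 := by rw [h₁supp, hIci, add_zero]
    · have : Z ⊆ Set.Iic 0 := by
        intro z hz
        by_contra hz0
        exact hne ⟨z, hz, show 0 < z from not_le.mp (show ¬ z ≤ 0 from hz0)⟩
      exact le_antisymm (le_trans (measure_mono this) h₁supp.le) zero_le
  -- Step 4 : ν₁ L = ν₁ R
  have hLReq : ν₁ L = ν₁ R := by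
    refine le_antisymm (measure_mono hLR) ?_
    calc ν₁ R ≤ ν₁ (L ∪ Z) := measure_mono (fun x hx => by
          by_cases hxL : x ∈ L
          · exact Or.inl hxL
          · exact Or.inr (hRLZ ⟨hx, hxL⟩))
      _ ≤ ν₁ L + ν₁ Z := measure_union_le _ _
      _ = ν₁ L := by rw [hZ0, add_zero]
  rw [hLReq]
  show ν₁ R = t
  -- t is finite and at most the total mass
  have htfin : t ≠ ⊤ := tail_ne_top ν₂ h₂mom hb
  have htM : t ≤ ν₁ (Set.Ioi 0) := le_trans (hanti₂ hb.le) hmass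
  -- for x ≤ 0 the ν₁-tail is the full mass
  have hfull : ∀ x : ℝ, x ≤ 0 → ν₁ (Set.Ioi x) = ν₁ (Set.Ioi 0) := by
    intro x hx
    refine le_antisymm ?_ (hanti hx)
    calc ν₁ (Set.Ioi x) ≤ ν₁ (Set.Iic 0 ∪ Set.Ioi 0) := measure_mono (fun y _ => by
          by_cases hy : y ≤ 0
          · exact Or.inl hy
          · exact Or.inr (not_le.mp hy))
      _ ≤ ν₁ (Set.Iic 0) + ν₁ (Set.Ioi 0) := measure_union_le _ _
      _ = ν₁ (Set.Ioi 0) := by rw [h₁supp, zero_add]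
  -- Step 5 : ν₁ R = t
  rcases eq_or_lt_of_le (zero_le : 0 ≤ t) with ht0 | ht0
  · have : R = ∅ := by
      ext x; simp only [hR, Set.mem_setOf_eq, Set.mem_empty_iff_false, iff_false, not_lt, ← ht0]
      exact zero_le
    rw [this, measure_empty, ← ht0]
  · -- R is nonempty
    have hRne : R.Nonempty := by
      have hinf : (⨅ n : ℕ, ν₁ (Set.Ioi (n + 1 : ℝ))) < t := by
        rw [tail_iInf ν₁ h₁mom]; exact ht0
      obtain ⟨n, hn⟩ := iInf_lt_iff.mp hinf
      exact ⟨(n + 1 : ℝ), hn⟩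
    -- R is upward closed and contained in Ioi 0
    have hRup : ∀ {x y : ℝ}, x ∈ R → x ≤ y → y ∈ R := by
      intro x y hx hxy
      exact lt_of_le_of_lt (hanti hxy) hx
    have hRpos : R ⊆ Set.Ioi 0 := by
      intro x hx
      by_contra hx0
      have := hfull x (not_lt.mp hx0)
      simp only [hR, Set.mem_setOf_eq, this] at hx
      exact absurd htM (not_le.mpr hx)
    set c := sInf R with hc
    have hbddR : BddBelow R := ⟨0, fun z hz => (hRpos hz).le⟩
    have hc0 : 0 ≤ c := le_csInf hRne fun z hz => (hRpos hz).le
    -- sandwich : Ioi c ⊆ R ⊆ Ici c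
    have hIoiR : Set.Ioi c ⊆ R := by
      intro x hx
      obtain ⟨z, hzR, hzx⟩ := exists_lt_of_csInf_lt hRne hx
      exact hRup hzR hzx.le
    have hRIci : R ⊆ Set.Ici c := fun z hz => csInf_le hbddR hz
    have hIciIoi : ν₁ (Set.Ici c) = ν₁ (Set.Ioi c) :=
      (measure_congr (Ioi_ae_eq_Ici (μ := ν₁) (a := c))).symm
    have hνR : ν₁ R = ν₁ (Set.Ioi c) :=
      le_antisymm (le_trans (measure_mono hRIci) hIciIoi.le) (measure_mono hIoiR)
    rw [hνR]
    -- upper bound : ν₁ (Ioi c) ≤ t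
    have hub : ν₁ (Set.Ioi c) ≤ t :=
      tail_right_cont ν₁ c t fun x hx => (hIoiR hx).le
    -- lower bound : t ≤ ν₁ (Ioi c)
    have hlb : t ≤ ν₁ (Set.Ioi c) := by
      rcases eq_or_lt_of_le hc0 with hceq | hcpos
      · exact le_trans htM (hanti (le_of_eq hceq.symm))
      · rw [← hIciIoi]
        have hiinter : Set.Ici c = ⋂ n : ℕ, Set.Ioi (c - (c / 2) / (n + 1)) := by
          ext x
          simp only [Set.mem_Ici, Set.mem_iInter, Set.mem_Ioi]
          constructor
          · intro hx n
            have : (0:ℝ) < (c / 2) / (n + 1) := by positivity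
            linarith
          · intro hx
            by_contra hcon
            have hcx : (0:ℝ) < c - x := sub_pos.mpr (not_le.mp hcon)
            obtain ⟨n, hn⟩ := exists_nat_gt ((c / 2) / (c - x))
            have hpos : (0:ℝ) < (n:ℝ) + 1 := by positivity
            have h1 : (c / 2) / (c - x) < (n:ℝ) + 1 := by linarith
            have h2 : c / 2 < ((n:ℝ) + 1) * (c - x) := (div_lt_iff₀ hcx).mp h1
            have h3 : (c / 2) / ((n:ℝ) + 1) < c - x :=
              (div_lt_iff₀ hpos).mpr (by linarith [mul_comm ((n:ℝ) + 1) (c - x)])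
            linarith [hx n]
        have hantiI : Antitone fun n : ℕ => Set.Ioi (c - (c / 2) / (n + 1)) := by
          intro n m hnm
          apply Set.Ioi_subset_Ioi
          have h1 : (0:ℝ) < (n:ℝ) + 1 := by positivity
          have h2 : (n:ℝ) + 1 ≤ (m:ℝ) + 1 := by exact_mod_cast by omega
          have h3 := div_le_div_of_nonneg_left (le_of_lt (half_pos hcpos)) h1 h2
          linarith
        rw [hiinter, hantiI.measure_iInter
          (fun n => measurableSet_Ioi.nullMeasurableSet)
          ⟨0, by
            refine tail_ne_top ν₁ h₁mom ?_
            have : (c/2)/((0:ℕ)+1) = c/2 := by norm_num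
            rw [this]; linarith⟩]
        refine le_iInf fun n => ?_
        have hlt : c - (c / 2) / (n + 1) < c := by
          have : (0:ℝ) < (c / 2) / (n + 1) := by positivity
          linarith
        have hnotR : (c - (c / 2) / (n + 1)) ∉ R := fun hmem =>
          absurd (csInf_le hbddR hmem) (not_le.mpr hlt)
        simpa only [hR, Set.mem_setOf_eq, not_lt] using hnotR
    exact le_antisymm hub hlb
end

section
/- Let ν¹, ν² ∈ M₂(Ω₁) and let γ be the restriction to Ω₂ = [0,∞)² \ {0} of the pushforward of the Lebesgue measure on (0,∞) under t ↦ (U_{ν¹}^{-1}(t), U_{ν²}^{-1}(t)). Then γ has marginals (restricted to (0,∞)) equal to ν¹ and ν², i.e., for every a > 0, γ((a,∞) × [0,∞)) = U_{ν¹}(a) and γ([0,∞) × (a,∞)) = U_{ν²}(a), and for all a,b > 0, γ((a,∞) × (b,∞)) = min(U_{ν¹}(a), U_{ν²}(b)). -/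
open MeasureTheory ENNReal

namespace Stmt14Aux

noncomputable def G (ν : Measure ℝ) (t : ℝ) : ℝ :=
  sInf {x : ℝ | 0 ≤ x ∧ ν (Set.Ioi x) ≤ ENNReal.ofReal t}

lemma markov (ν : Measure ℝ) {c : ℝ} (hc : 0 < c) :
    ENNReal.ofReal (c ^ 2) * ν (Set.Ioi c) ≤ ∫⁻ x, ENNReal.ofReal (x ^ 2) ∂ν := by
  calc ENNReal.ofReal (c ^ 2) * ν (Set.Ioi c)
      = ∫⁻ _ in Set.Ioi c, ENNReal.ofReal (c ^ 2) ∂ν := (setLIntegral_const _ _).symm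
    _ ≤ ∫⁻ x in Set.Ioi c, ENNReal.ofReal (x ^ 2) ∂ν := by
        refine setLIntegral_mono (by measurability) fun x hx => ?_
        exact ENNReal.ofReal_le_ofReal (by nlinarith [hx.out])
    _ ≤ _ := setLIntegral_le_lintegral _ _

lemma fin (ν : Measure ℝ) (hmom : ∫⁻ x, ENNReal.ofReal (x ^ 2) ∂ν ≠ ⊤)
    {a : ℝ} (ha : 0 < a) : ν (Set.Ioi a) ≠ ⊤ := by
  intro h
  have := markov ν ha
  rw [h, ENNReal.mul_top (by simp [ENNReal.ofReal_eq_zero]; nlinarith)] at this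
  exact hmom (top_le_iff.mp this)

lemma nonempty (ν : Measure ℝ) (hmom : ∫⁻ x, ENNReal.ofReal (x ^ 2) ∂ν ≠ ⊤)
    {t : ℝ} (ht : 0 < t) :
    {x : ℝ | 0 ≤ x ∧ ν (Set.Ioi x) ≤ ENNReal.ofReal t}.Nonempty := by
  set I := ∫⁻ x, ENNReal.ofReal (x ^ 2) ∂ν with hI
  set n : ℝ := max 1 (Real.sqrt (I.toReal / t)) with hn
  have hn1 : (1 : ℝ) ≤ n := le_max_left _ _
  have hn0 : 0 < n := lt_of_lt_of_le one_pos hn1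
  refine ⟨n, hn0.le, ?_⟩
  have hsq : I.toReal / t ≤ n ^ 2 := by
    have h1 : Real.sqrt (I.toReal / t) ≤ n := le_max_right _ _
    have h2 : Real.sqrt (I.toReal / t) ^ 2 = I.toReal / t :=
      Real.sq_sqrt (div_nonneg ENNReal.toReal_nonneg ht.le)
    nlinarith [Real.sqrt_nonneg (I.toReal / t)]
  have hle : I ≤ ENNReal.ofReal (t * n ^ 2) := by
    calc I = ENNReal.ofReal I.toReal := (ENNReal.ofReal_toReal hmom).symm
      _ ≤ ENNReal.ofReal (t * n ^ 2) := by
          apply ENNReal.ofReal_le_ofReal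
          rw [div_le_iff₀ ht] at hsq
          nlinarith
  have hmar := markov ν hn0
  have : ENNReal.ofReal (n ^ 2) * ν (Set.Ioi n) ≤ ENNReal.ofReal (n ^ 2) * ENNReal.ofReal t := by
    calc ENNReal.ofReal (n ^ 2) * ν (Set.Ioi n) ≤ I := hmar
      _ ≤ ENNReal.ofReal (t * n ^ 2) := hle
      _ = ENNReal.ofReal (n ^ 2) * ENNReal.ofReal t := by
          rw [← ENNReal.ofReal_mul (by positivity)]; ring_nf
  exact (ENNReal.mul_le_mul_iff_right (by simp [ENNReal.ofReal_eq_zero]; nlinarith)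
    ENNReal.ofReal_ne_top).mp this

lemma bddBelow' (ν : Measure ℝ) (t : ℝ) :
    BddBelow {x : ℝ | 0 ≤ x ∧ ν (Set.Ioi x) ≤ ENNReal.ofReal t} :=
  ⟨0, fun _ hx => hx.1⟩

lemma G_nonneg (ν : Measure ℝ) (t : ℝ) : 0 ≤ G ν t :=
  Real.sInf_nonneg fun _ hx => hx.1

lemma key (ν : Measure ℝ) (hmom : ∫⁻ x, ENNReal.ofReal (x ^ 2) ∂ν ≠ ⊤)
    {a t : ℝ} (ha : 0 < a) (ht : 0 < t) :
    a < G ν t ↔ ENNReal.ofReal t < ν (Set.Ioi a) := by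
  set S := {x : ℝ | 0 ≤ x ∧ ν (Set.Ioi x) ≤ ENNReal.ofReal t} with hS
  have hne : S.Nonempty := nonempty ν hmom ht
  have hbd : BddBelow S := bddBelow' ν t
  constructor
  · intro h
    by_contra hc
    push_neg at hc
    have : a ∈ S := ⟨ha.le, hc⟩
    exact absurd (csInf_le hbd this) (not_le.mpr h)
  · intro h
    by_contra hc
    push_neg at hc
    -- sInf S ≤ a, derive ν (Ioi a) ≤ ofReal t
    have hcover : Set.Ioi a = ⋃ n : ℕ, Set.Ioi (a + 1 / (n + 1)) := by
      ext x
      simp only [Set.mem_Ioi, Set.mem_iUnion]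
      constructor
      · intro hx
        obtain ⟨n, hn⟩ := exists_nat_one_div_lt (sub_pos.mpr hx)
        exact ⟨n, by linarith⟩
      · rintro ⟨n, hn⟩
        have : (0 : ℝ) < 1 / (n + 1) := by positivity
        linarith
    have hmono : Monotone fun n : ℕ => Set.Ioi (a + 1 / (n + 1)) := by
      intro m n hmn
      apply Set.Ioi_subset_Ioi
      have hmn' : (m : ℝ) + 1 ≤ (n : ℝ) + 1 := by exact_mod_cast Nat.succ_le_succ hmn
      have : (1 : ℝ) / (n + 1) ≤ 1 / (m + 1) :=
        one_div_le_one_div_of_le (by positivity) hmn'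
      linarith
    have hle : ν (Set.Ioi a) ≤ ENNReal.ofReal t := by
      rw [hcover, (hmono.directed_le).measure_iUnion]
      refine iSup_le fun n => ?_
      have hlt : sInf S < a + 1 / (n + 1) := lt_of_le_of_lt hc (lt_add_of_pos_right a (by positivity))
      obtain ⟨x, hxS, hx⟩ := (csInf_lt_iff hbd hne).mp hlt
      calc ν (Set.Ioi (a + 1 / (n + 1))) ≤ ν (Set.Ioi x) :=
            measure_mono (Set.Ioi_subset_Ioi hx.le)
        _ ≤ ENNReal.ofReal t := hxS.2
    exact absurd hle (not_le.mpr h)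

lemma G_measurable (ν : Measure ℝ) (hmom : ∫⁻ x, ENNReal.ofReal (x ^ 2) ∂ν ≠ ⊤) :
    Measurable (G ν) := by
  apply measurable_of_Ioi
  intro c
  apply Set.OrdConnected.measurableSet
  constructor
  rintro t₁ h₁ t₂ h₂ t ⟨ht₁, ht₂⟩
  simp only [Set.mem_preimage, Set.mem_Ioi] at h₁ h₂ ⊢
  rcases le_or_gt t 0 with h | h
  · have : G ν t = G ν t₁ := by
      unfold G
      congr 2
      rw [ENNReal.ofReal_eq_zero.mpr h, ENNReal.ofReal_eq_zero.mpr (by linarith)]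
    rw [this]; exact h₁
  · have hsub : {x : ℝ | 0 ≤ x ∧ ν (Set.Ioi x) ≤ ENNReal.ofReal t} ⊆
        {x : ℝ | 0 ≤ x ∧ ν (Set.Ioi x) ≤ ENNReal.ofReal t₂} :=
      fun x hx => ⟨hx.1, hx.2.trans (ENNReal.ofReal_le_ofReal ht₂)⟩
    have : G ν t₂ ≤ G ν t :=
      csInf_le_csInf (bddBelow' ν t₂) (nonempty ν hmom h) hsub
    exact lt_of_lt_of_le h₂ this

end Stmt14Aux

open Stmt14Aux in
theorem stmt_14 (ν₁ ν₂ : Measure ℝ)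
    (h₁supp : ν₁ (Set.Iic 0) = 0) (h₂supp : ν₂ (Set.Iic 0) = 0)
    (h₁mom : ∫⁻ x, ENNReal.ofReal (x ^ 2) ∂ν₁ ≠ ⊤)
    (h₂mom : ∫⁻ x, ENNReal.ofReal (x ^ 2) ∂ν₂ ≠ ⊤)
    -- `γ` is the restriction to `Ω₂ = [0,∞)² \ {0}` of the pushforward of Lebesgue
    -- measure on `(0,∞)` under `t ↦ (U_{ν¹}^{-1}(t), U_{ν²}^{-1}(t))`
    (γ : Measure (ℝ × ℝ))
    (hγ : γ = ((volume.restrict (Set.Ioi (0 : ℝ))).map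
        (fun t : ℝ => (sInf {x : ℝ | 0 ≤ x ∧ ν₁ (Set.Ioi x) ≤ ENNReal.ofReal t},
          sInf {x : ℝ | 0 ≤ x ∧ ν₂ (Set.Ioi x) ≤ ENNReal.ofReal t}))).restrict
        {p : ℝ × ℝ | (0 ≤ p.1 ∧ 0 ≤ p.2) ∧ p ≠ 0}) :
    (∀ a > (0 : ℝ), γ (Set.Ioi a ×ˢ Set.Ici (0 : ℝ)) = ν₁ (Set.Ioi a)) ∧
    (∀ b > (0 : ℝ), γ (Set.Ici (0 : ℝ) ×ˢ Set.Ioi b) = ν₂ (Set.Ioi b)) ∧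
    (∀ a > (0 : ℝ), ∀ b > (0 : ℝ),
      γ (Set.Ioi a ×ˢ Set.Ioi b) = min (ν₁ (Set.Ioi a)) (ν₂ (Set.Ioi b))) := by
  have hF : Measurable (fun t : ℝ => (G ν₁ t, G ν₂ t)) :=
    (G_measurable ν₁ h₁mom).prodMk (G_measurable ν₂ h₂mom)
  have hγ' : γ = ((volume.restrict (Set.Ioi (0 : ℝ))).map
      (fun t : ℝ => (G ν₁ t, G ν₂ t))).restrict
      {p : ℝ × ℝ | (0 ≤ p.1 ∧ 0 ≤ p.2) ∧ p ≠ 0} := hγ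
  have hΩ : MeasurableSet {p : ℝ × ℝ | (0 ≤ p.1 ∧ 0 ≤ p.2) ∧ p ≠ 0} := by
    have : {p : ℝ × ℝ | (0 ≤ p.1 ∧ 0 ≤ p.2) ∧ p ≠ 0} =
        ({p : ℝ × ℝ | 0 ≤ p.1} ∩ {p : ℝ × ℝ | 0 ≤ p.2}) ∩ {(0 : ℝ × ℝ)}ᶜ := by
      ext p; simp [Set.mem_setOf_eq, and_assoc]
    rw [this]
    exact ((measurable_fst measurableSet_Ici).inter
      (measurable_snd measurableSet_Ici)).inter (measurableSet_singleton _).compl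
  -- general computation
  have hcomp : ∀ S : Set (ℝ × ℝ), MeasurableSet S →
      γ S = volume ((fun t : ℝ => (G ν₁ t, G ν₂ t)) ⁻¹'
        (S ∩ {p : ℝ × ℝ | (0 ≤ p.1 ∧ 0 ≤ p.2) ∧ p ≠ 0}) ∩ Set.Ioi 0) := by
    intro S hS
    rw [hγ', Measure.restrict_apply' hΩ,
      Measure.map_apply hF (hS.inter hΩ), Measure.restrict_apply' measurableSet_Ioi]
  refine ⟨fun a ha => ?_, fun b hb => ?_, fun a ha b hb => ?_⟩
  · rw [hcomp _ (measurableSet_Ioi.prod measurableSet_Ici)]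
    have hset : (fun t : ℝ => (G ν₁ t, G ν₂ t)) ⁻¹'
        ((Set.Ioi a ×ˢ Set.Ici (0:ℝ)) ∩ {p : ℝ × ℝ | (0 ≤ p.1 ∧ 0 ≤ p.2) ∧ p ≠ 0}) ∩ Set.Ioi 0
        = Set.Ioo 0 (ν₁ (Set.Ioi a)).toReal := by
      ext t
      simp only [Set.mem_inter_iff, Set.mem_preimage, Set.mem_prod, Set.mem_Ioi, Set.mem_Ici,
        Set.mem_setOf_eq, Set.mem_Ioo, ne_eq, Prod.mk_eq_zero]
      constructor
      · rintro ⟨⟨⟨h1, _⟩, _⟩, ht⟩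
        refine ⟨ht, ?_⟩
        have := (key ν₁ h₁mom ha ht).mp h1
        exact (ENNReal.ofReal_lt_iff_lt_toReal ht.le (fin ν₁ h₁mom ha)).mp this
      · rintro ⟨ht, hlt⟩
        have h1 : a < G ν₁ t := (key ν₁ h₁mom ha ht).mpr
          ((ENNReal.ofReal_lt_iff_lt_toReal ht.le (fin ν₁ h₁mom ha)).mpr hlt)
        exact ⟨⟨⟨h1, G_nonneg ν₂ t⟩, ⟨(ha.trans h1).le, G_nonneg ν₂ t⟩,
          fun h => by linarith [h.1, ha.trans h1]⟩, ht⟩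
    rw [hset, Real.volume_Ioo, sub_zero, ENNReal.ofReal_toReal (fin ν₁ h₁mom ha)]
  · rw [hcomp _ (measurableSet_Ici.prod measurableSet_Ioi)]
    have hset : (fun t : ℝ => (G ν₁ t, G ν₂ t)) ⁻¹'
        ((Set.Ici (0:ℝ) ×ˢ Set.Ioi b) ∩ {p : ℝ × ℝ | (0 ≤ p.1 ∧ 0 ≤ p.2) ∧ p ≠ 0}) ∩ Set.Ioi 0
        = Set.Ioo 0 (ν₂ (Set.Ioi b)).toReal := by
      ext t
      simp only [Set.mem_inter_iff, Set.mem_preimage, Set.mem_prod, Set.mem_Ioi, Set.mem_Ici,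
        Set.mem_setOf_eq, Set.mem_Ioo, ne_eq, Prod.mk_eq_zero]
      constructor
      · rintro ⟨⟨⟨_, h2⟩, _⟩, ht⟩
        refine ⟨ht, ?_⟩
        have := (key ν₂ h₂mom hb ht).mp h2
        exact (ENNReal.ofReal_lt_iff_lt_toReal ht.le (fin ν₂ h₂mom hb)).mp this
      · rintro ⟨ht, hlt⟩
        have h2 : b < G ν₂ t := (key ν₂ h₂mom hb ht).mpr
          ((ENNReal.ofReal_lt_iff_lt_toReal ht.le (fin ν₂ h₂mom hb)).mpr hlt)
        exact ⟨⟨⟨G_nonneg ν₁ t, h2⟩, ⟨G_nonneg ν₁ t, (hb.trans h2).le⟩,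
          fun h => by linarith [h.2, hb.trans h2]⟩, ht⟩
    rw [hset, Real.volume_Ioo, sub_zero, ENNReal.ofReal_toReal (fin ν₂ h₂mom hb)]
  · rw [hcomp _ (measurableSet_Ioi.prod measurableSet_Ioi)]
    have hset : (fun t : ℝ => (G ν₁ t, G ν₂ t)) ⁻¹'
        ((Set.Ioi a ×ˢ Set.Ioi b) ∩ {p : ℝ × ℝ | (0 ≤ p.1 ∧ 0 ≤ p.2) ∧ p ≠ 0}) ∩ Set.Ioi 0
        = Set.Ioo 0 (min (ν₁ (Set.Ioi a)).toReal (ν₂ (Set.Ioi b)).toReal) := by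
      ext t
      simp only [Set.mem_inter_iff, Set.mem_preimage, Set.mem_prod, Set.mem_Ioi, Set.mem_Ici,
        Set.mem_setOf_eq, Set.mem_Ioo, ne_eq, Prod.mk_eq_zero, lt_min_iff]
      constructor
      · rintro ⟨⟨⟨h1, h2⟩, _⟩, ht⟩
        exact ⟨ht,
          (ENNReal.ofReal_lt_iff_lt_toReal ht.le (fin ν₁ h₁mom ha)).mp
            ((key ν₁ h₁mom ha ht).mp h1),
          (ENNReal.ofReal_lt_iff_lt_toReal ht.le (fin ν₂ h₂mom hb)).mp
            ((key ν₂ h₂mom hb ht).mp h2)⟩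
      · rintro ⟨ht, hlt1, hlt2⟩
        have h1 : a < G ν₁ t := (key ν₁ h₁mom ha ht).mpr
          ((ENNReal.ofReal_lt_iff_lt_toReal ht.le (fin ν₁ h₁mom ha)).mpr hlt1)
        have h2 : b < G ν₂ t := (key ν₂ h₂mom hb ht).mpr
          ((ENNReal.ofReal_lt_iff_lt_toReal ht.le (fin ν₂ h₂mom hb)).mpr hlt2)
        exact ⟨⟨⟨h1, h2⟩, ⟨(ha.trans h1).le, (hb.trans h2).le⟩,
          fun h => by linarith [h.1, ha.trans h1]⟩, ht⟩
    rw [hset, Real.volume_Ioo, sub_zero]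
    rcases le_total (ν₁ (Set.Ioi a)).toReal (ν₂ (Set.Ioi b)).toReal with h | h
    · rw [min_eq_left h, ENNReal.ofReal_toReal (fin ν₁ h₁mom ha), min_eq_left]
      exact (ENNReal.toReal_le_toReal (fin ν₁ h₁mom ha) (fin ν₂ h₂mom hb)).mp h
    · rw [min_eq_right h, ENNReal.ofReal_toReal (fin ν₂ h₂mom hb), min_eq_right]
      exact (ENNReal.toReal_le_toReal (fin ν₂ h₂mom hb) (fin ν₁ h₁mom ha)).mp h
end
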